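/- For n ≥ 3, the graph K̄_{n,n}, obtained from the complete bipartite graph K_{n,n} with parts {v_i : i ∈ Z_n} and {v'_i : i ∈ Z_n} by deleting the perfect matching {v_i v'_i : i ∈ Z_n}, has treewidth exactly n − 1. -/

import Mathlib

open SimpleGraph

/-- A tree decomposition of `G`: a tree of bags covering all vertices and
edges, such that the bags containing any fixed vertex form a (connected)
subtree. -/
structure TreeDecomp {V : Type} (G : SimpleGraph V) where
  ι : Type
  tree : SimpleGraph ι
  isTree : tree.IsTree
  bag : ι → Finset V
  mem_bag : ∀ v : V, ∃ i, v ∈ bag i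
  edge_bag : ∀ ⦃u v : V⦄, G.Adj u v → ∃ i, u ∈ bag i ∧ v ∈ bag i
  bag_connected : ∀ v : V, (tree.induce {i | v ∈ bag i}).Connected

/-- `G` has a tree decomposition of width at most `w`. -/
def HasTreewidthLE {V : Type} (G : SimpleGraph V) (w : ℕ) : Prop :=
  ∃ D : TreeDecomp G, ∀ i, (D.bag i).card ≤ w + 1

/-- The treewidth of `G`: the least width of a tree decomposition of `G`. -/
noncomputable def treewidth {V : Type} (G : SimpleGraph V) : ℕ :=
  sInf {w | HasTreewidthLE G w}

/-- `K̄_{n,n}`: the complete bipartite graph `K_{n,n}` on parts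
`{inl i}` and `{inr i}`, minus the perfect matching `{(inl i, inr i)}`. -/
def barK (n : ℕ) : SimpleGraph (Fin n ⊕ Fin n) where
  Adj x y :=
    match x, y with
    | Sum.inl i, Sum.inr j => i ≠ j
    | Sum.inr i, Sum.inl j => i ≠ j
    | _, _ => False
  symm := by constructor; rintro (i | i) (j | j) h <;> simp_all <;> exact fun h' => h h'.symm
  loopless := by constructor; rintro (i | i) h <;> simp_all

namespace TreeDecomp

variable {V : Type} {G : SimpleGraph V} (D : TreeDecomp G)

noncomputable def pth (a b : D.ι) : D.tree.Walk a b :=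
  (D.isTree.existsUnique_path a b).choose

lemma pth_isPath (a b : D.ι) : (D.pth a b).IsPath :=
  (D.isTree.existsUnique_path a b).choose_spec.1

lemma pth_eq {a b : D.ι} (p : D.tree.Walk a b) (hp : p.IsPath) : p = D.pth a b :=
  (D.isTree.existsUnique_path a b).choose_spec.2 p hp

def Tset (v : V) : Set D.ι := {i | v ∈ D.bag i}

lemma pth_subset {v : V} {a b : D.ι} (ha : a ∈ D.Tset v) (hb : b ∈ D.Tset v) :
    ∀ x ∈ (D.pth a b).support, x ∈ D.Tset v := by
  classical
  obtain ⟨w⟩ := (D.bag_connected v) ⟨a, ha⟩ ⟨b, hb⟩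
  let f : (D.tree.induce {i | v ∈ D.bag i}) →g D.tree := ⟨Subtype.val, fun h => h⟩
  let w' : D.tree.Walk a b := w.map f
  have hsub : ∀ x ∈ w'.support, x ∈ D.Tset v := by
    intro x hx
    have : w'.support = w.support.map Subtype.val := Walk.support_map f w
    rw [this, List.mem_map] at hx
    obtain ⟨⟨y, hy⟩, _, rfl⟩ := hx
    exact hy
  have hP : (w'.toPath : D.tree.Walk a b).IsPath := w'.toPath.2
  have heq : (w'.toPath : D.tree.Walk a b) = D.pth a b := D.pth_eq _ hP
  intro x hx
  rw [← heq] at hx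
  exact hsub x (w'.support_toPath_subset hx)

noncomputable def depth (r x : D.ι) : ℕ := (D.pth r x).length

lemma depth_le {r y z : D.ι} (hz : z ∈ (D.pth r y).support) :
    D.depth r z ≤ D.depth r y ∧ (D.depth r z = D.depth r y → z = y) := by
  classical
  have ht : ((D.pth r y).takeUntil z hz) = D.pth r z :=
    D.pth_eq _ ((D.pth_isPath r y).takeUntil hz)
  have hlen := congrArg Walk.length ((D.pth r y).take_spec hz)
  rw [Walk.length_append, ht] at hlen
  unfold depth
  constructor
  · omega
  · intro hEq
    have h0 : ((D.pth r y).dropUntil z hz).length = 0 := by omega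
    exact Walk.eq_of_length_eq_zero h0

lemma exists_top (r : D.ι) (v : V) :
    ∃ t ∈ D.Tset v, ∀ x ∈ D.Tset v, t ∈ (D.pth r x).support := by
  classical
  obtain ⟨x₀, hx₀⟩ : (D.Tset v).Nonempty := (D.mem_bag v).imp fun i h => h
  set p₀ := D.pth r x₀ with hp₀
  set S : Set ℕ := {d | ∃ i, i ∈ D.Tset v ∧ i ∈ p₀.support ∧ D.depth r i = d} with hS
  have hSne : S.Nonempty := ⟨_, x₀, hx₀, p₀.end_mem_support, rfl⟩
  obtain ⟨t, htv, htp, htd⟩ := Nat.sInf_mem hSne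
  refine ⟨t, htv, ?_⟩
  intro x hx
  have hmin : ∀ z, z ∈ D.Tset v → z ∈ p₀.support → D.depth r t ≤ D.depth r z := by
    intro z h1 h2; rw [htd]; exact Nat.sInf_le ⟨z, h1, h2, rfl⟩
  have hto : p₀.takeUntil t htp = D.pth r t := D.pth_eq _ ((D.pth_isPath r x₀).takeUntil htp)
  have hw : ((D.pth r t).append (D.pth t x)).IsPath := by
    rw [Walk.isPath_def, Walk.support_append]
    refine List.Nodup.append (D.pth_isPath r t).support_nodup
      ((D.pth_isPath t x).support_nodup.tail) ?_
    intro z hz1 hz2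
    have hzt : z ≠ t := by
      intro h
      have hnd := (D.pth_isPath t x).support_nodup
      rw [(D.pth t x).support_eq_cons] at hnd
      exact (List.nodup_cons.mp hnd).1 (h ▸ hz2)
    have hzT : z ∈ D.Tset v := D.pth_subset htv hx z (List.mem_of_mem_tail hz2)
    have hzp₀ : z ∈ p₀.support := by
      rw [← hto] at hz1
      exact p₀.support_takeUntil_subset htp hz1
    have h1 := D.depth_le (r := r) (y := t) hz1
    exact hzt (h1.2 (le_antisymm h1.1 (hmin z hzT hzp₀)))
  have heq := D.pth_eq _ hw
  rw [← heq, Walk.mem_support_append_iff]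
  exact Or.inl ((D.pth r t).end_mem_support)

lemma exists_closed_nbhd [Fintype V] [Nonempty V] :
    ∃ (v : V) (t : D.ι), v ∈ D.bag t ∧ ∀ u, G.Adj u v → u ∈ D.bag t := by
  classical
  obtain ⟨r, -⟩ := D.mem_bag (Classical.arbitrary V)
  choose top htop htop' using fun v => D.exists_top r v
  obtain ⟨v, -, hv⟩ := Finset.exists_max_image Finset.univ (fun v => D.depth r (top v))
    ⟨Classical.arbitrary V, Finset.mem_univ _⟩
  refine ⟨v, top v, htop v, ?_⟩
  intro u hadj
  obtain ⟨x, hux, hvx⟩ := D.edge_bag hadj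
  have h1 : top u ∈ (D.pth r x).support := htop' u x hux
  have h2 : top v ∈ (D.pth r x).support := htop' v x hvx
  have hto : (D.pth r x).takeUntil (top u) h1 = D.pth r (top u) :=
    D.pth_eq _ ((D.pth_isPath r x).takeUntil h1)
  have hdo : (D.pth r x).dropUntil (top u) h1 = D.pth (top u) x :=
    D.pth_eq _ ((D.pth_isPath r x).dropUntil h1)
  rw [← (D.pth r x).take_spec h1, Walk.mem_support_append_iff] at h2
  rcases h2 with h2 | h2
  · rw [hto] at h2
    have hle := D.depth_le h2
    have hmax : D.depth r (top u) ≤ D.depth r (top v) := hv u (Finset.mem_univ u)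
    have heq : top v = top u := hle.2 (le_antisymm hle.1 hmax)
    rw [heq]; exact htop u
  · rw [hdo] at h2
    exact D.pth_subset (htop u) hux _ h2

lemma exists_large_bag [Fintype V] [Nonempty V] [DecidableEq V] [DecidableRel G.Adj] :
    ∃ (v : V) (t : D.ι), G.degree v + 1 ≤ (D.bag t).card := by
  obtain ⟨v, t, h1, h2⟩ := D.exists_closed_nbhd
  refine ⟨v, t, ?_⟩
  have hsub : insert v (G.neighborFinset v) ⊆ D.bag t := by
    intro u hu
    rcases Finset.mem_insert.mp hu with rfl | hu
    · exact h1
    · exact h2 u ((G.mem_neighborFinset v u).mp hu).symm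
  have := Finset.card_le_card hsub
  rwa [Finset.card_insert_of_notMem (by simp), SimpleGraph.card_neighborFinset_eq_degree] at this

end TreeDecomp

@[simp] lemma barK_adj_inl_inr {n} {i j : Fin n} :
    (barK n).Adj (Sum.inl i) (Sum.inr j) ↔ i ≠ j := Iff.rfl
@[simp] lemma barK_adj_inr_inl {n} {i j : Fin n} :
    (barK n).Adj (Sum.inr i) (Sum.inl j) ↔ i ≠ j := Iff.rfl
@[simp] lemma barK_adj_inl_inl {n} {i j : Fin n} :
    ¬ (barK n).Adj (Sum.inl i) (Sum.inl j) := fun h => h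
@[simp] lemma barK_adj_inr_inr {n} {i j : Fin n} :
    ¬ (barK n).Adj (Sum.inr i) (Sum.inr j) := fun h => h

instance {n : ℕ} : DecidableRel (barK n).Adj := fun x y =>
  match x, y with
  | Sum.inl i, Sum.inr j => inferInstanceAs (Decidable (i ≠ j))
  | Sum.inr i, Sum.inl j => inferInstanceAs (Decidable (i ≠ j))
  | Sum.inl _, Sum.inl _ => inferInstanceAs (Decidable False)
  | Sum.inr _, Sum.inr _ => inferInstanceAs (Decidable False)

lemma barK_degree {n : ℕ} (v : Fin n ⊕ Fin n) : (barK n).degree v = n - 1 := by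
  rcases v with i | i
  · have : (barK n).neighborFinset (Sum.inl i) = (Finset.univ.erase i).image Sum.inr := by
      ext x
      rcases x with j | j <;>
        simp [SimpleGraph.mem_neighborFinset, ne_comm]
    rw [SimpleGraph.degree, this, Finset.card_image_of_injective _ Sum.inr_injective,
      Finset.card_erase_of_mem (Finset.mem_univ _), Finset.card_univ, Fintype.card_fin]
  · have : (barK n).neighborFinset (Sum.inr i) = (Finset.univ.erase i).image Sum.inl := by
      ext x
      rcases x with j | j <;>
        simp [SimpleGraph.mem_neighborFinset, ne_comm]
    rw [SimpleGraph.degree, this, Finset.card_image_of_injective _ Sum.inl_injective,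
      Finset.card_erase_of_mem (Finset.mem_univ _), Finset.card_univ, Fintype.card_fin]

@[reducible] def starT (n : ℕ) : SimpleGraph (Option (Fin n)) where
  Adj x y := x ≠ y ∧ (x = none ∨ y = none)
  symm := ⟨fun x y h => ⟨h.1.symm, h.2.symm⟩⟩
  loopless := ⟨fun x h => h.1 rfl⟩

lemma no_reach {W : Type} {H : SimpleGraph W} {a b : W} (hab : a ≠ b)
    (hiso : ∀ z, ¬H.Adj b z) : ¬H.Reachable a b := by
  rintro ⟨w⟩
  cases hw : w.reverse with
  | nil => exact hab rfl
  | cons h p => exact hiso _ h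

lemma starT_isTree (n : ℕ) : (starT n).IsTree := by
  constructor
  · have key : ∀ x : Option (Fin n), (starT n).Reachable x none := by
      intro x
      rcases eq_or_ne x none with rfl | h
      · exact Reachable.refl _
      · exact Adj.reachable ⟨h, Or.inr rfl⟩
    exact ⟨fun x y => (key x).trans (key y).symm⟩
  · rw [isAcyclic_iff_forall_adj_isBridge]
    rintro x y ⟨hne, rfl | rfl⟩
    · refine isBridge_iff.mpr ?_
      have hiso : ∀ z, ¬((starT n) \ fromEdgeSet {s(none, y)}).Adj y z := by
        rintro z ⟨⟨hyz, hy | hz⟩, hnot⟩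
        · exact hne hy.symm
        · subst hz
          exact hnot ((fromEdgeSet_adj _).mpr ⟨Set.mem_singleton_iff.mpr (Sym2.eq_swap), hyz⟩)
      exact no_reach hne hiso
    · refine isBridge_iff.mpr ?_
      have hiso : ∀ z, ¬((starT n) \ fromEdgeSet {s(x, none)}).Adj x z := by
        rintro z ⟨⟨hxz, hx | hz⟩, hnot⟩
        · exact hne hx
        · subst hz
          exact hnot ((fromEdgeSet_adj _).mpr ⟨rfl, hxz⟩)
      intro hr
      exact no_reach (Ne.symm hne) hiso hr.symm

def upBag (n : ℕ) : Option (Fin n) → Finset (Fin n ⊕ Fin n)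
  | none => Finset.univ.image Sum.inl
  | some k => insert (Sum.inr k) ((Finset.univ.erase k).image Sum.inl)

lemma mem_upBag_inr {n : ℕ} {i : Fin n} {x : Option (Fin n)}
    (h : Sum.inr i ∈ upBag n x) : x = some i := by
  rcases x with - | k <;> simp [upBag] at h ⊢
  exact h.symm

def upDecomp (n : ℕ) : TreeDecomp (barK n) where
  ι := Option (Fin n)
  tree := starT n
  isTree := starT_isTree n
  bag := upBag n
  mem_bag := by
    rintro (i | i)
    · exact ⟨none, by simp [upBag]⟩
    · exact ⟨some i, by simp [upBag]⟩
  edge_bag := by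
    rintro (i | i) (j | j) h
    · exact absurd h (barK_adj_inl_inl)
    · exact ⟨some j, by simp [upBag, (barK_adj_inl_inr.mp h)], by simp [upBag]⟩
    · exact ⟨some i, by simp [upBag], by simp [upBag, Ne.symm (barK_adj_inr_inl.mp h)]⟩
    · exact absurd h (barK_adj_inr_inr)
  bag_connected := by
    rintro (i | i)
    · have hnone : none ∈ {x | Sum.inl i ∈ upBag n x} := by simp [upBag]
      have key : ∀ x : {x | Sum.inl i ∈ upBag n x},
          ((starT n).induce {x | Sum.inl i ∈ upBag n x}).Reachable x ⟨none, hnone⟩ := by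
        rintro ⟨x, hx⟩
        rcases eq_or_ne x none with rfl | h
        · exact Reachable.refl _
        · exact Adj.reachable ⟨h, Or.inr rfl⟩
      haveI : Nonempty {x | Sum.inl i ∈ upBag n x} := ⟨⟨none, hnone⟩⟩
      exact ⟨fun x y => (key x).trans (key y).symm⟩
    · have hmem : some i ∈ {x | Sum.inr i ∈ upBag n x} := by simp [upBag]
      haveI : Nonempty {x | Sum.inr i ∈ upBag n x} := ⟨⟨some i, hmem⟩⟩
      refine ⟨fun x y => ?_⟩
      have hx : x = ⟨some i, hmem⟩ := Subtype.ext (mem_upBag_inr x.2)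
      have hy : y = ⟨some i, hmem⟩ := Subtype.ext (mem_upBag_inr y.2)
      rw [hx, hy]

lemma upDecomp_card {n : ℕ} (hn : 1 ≤ n) (x : Option (Fin n)) :
    ((upDecomp n).bag x).card ≤ (n - 1) + 1 := by
  have h1 : (n - 1) + 1 = n := by omega
  rcases x with - | k
  · show (Finset.univ.image (Sum.inl : Fin n → Fin n ⊕ Fin n)).card ≤ (n-1)+1
    rw [Finset.card_image_of_injective _ Sum.inl_injective, Finset.card_univ, Fintype.card_fin, h1]
  · show (insert (Sum.inr k) ((Finset.univ.erase k).image Sum.inl)).card ≤ (n-1)+1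
    refine le_trans (Finset.card_insert_le _ _) ?_
    rw [Finset.card_image_of_injective _ Sum.inl_injective,
      Finset.card_erase_of_mem (Finset.mem_univ _), Finset.card_univ, Fintype.card_fin]


/-- for `n ≥ 3`, `treewidth K̄_{n,n} = n - 1`. -/
theorem treewidth_barK (n : ℕ) (hn : 3 ≤ n) : treewidth (barK n) = n - 1 := by
  have hmem : HasTreewidthLE (barK n) (n - 1) :=
    ⟨upDecomp n, fun x => upDecomp_card (by omega) x⟩
  refine le_antisymm (Nat.sInf_le hmem) (le_csInf ⟨_, hmem⟩ ?_)
  rintro w ⟨D, hD⟩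
  have : Nonempty (Fin n ⊕ Fin n) := ⟨Sum.inl ⟨0, by omega⟩⟩
  obtain ⟨v, t, hvt⟩ := D.exists_large_bag
  have hdeg := barK_degree v
  have hb := hD t
  omega
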